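/- Let O be a social optimum of a Shapley network design game with k players in which the set O^k of edges used by all k players is non-empty. Then the edge set E(O)∖O^k induces exactly two trees, and every player i has exactly one of her two terminals s_i, t_i in each of the two trees. -/

import Mathlib

/-- The `n`-th harmonic number `H_n = ∑_{i=1}^n 1/i`, as a real number. -/
noncomputable def harmonicR (n : ℕ) : ℝ := ∑ i ∈ Finset.range n, (1 : ℝ) / (i + 1)

/-- A Shapley network design game with `k` players on a finite undirected graph:
an undirected simple graph `G` on the vertex type `V`, positive edge costs `c`,
and terminal pairs `s i`, `t i` for each player `i`. -/
structure ShapleyGame (V : Type) [Fintype V] [DecidableEq V] (k : ℕ) where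
  G : SimpleGraph V
  c : Sym2 V → ℝ
  c_pos : ∀ e ∈ G.edgeSet, 0 < c e
  s : Fin k → V
  t : Fin k → V

namespace ShapleyGame

variable {V : Type} [Fintype V] [DecidableEq V] {k : ℕ}

/-- A strategy profile: a simple `s i`–`t i` path for each player `i`. -/
abbrev Profile (g : ShapleyGame V k) : Type :=
  ∀ i : Fin k, g.G.Path (g.s i) (g.t i)

/-- `k_e`: the number of players whose path uses edge `e` in profile `P`. -/
def ke (g : ShapleyGame V k) (P : g.Profile) (e : Sym2 V) : ℕ :=
  (Finset.univ.filter fun i : Fin k => e ∈ (P i).1.edges).card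

/-- The set `E(P)` of edges used by at least one player in profile `P`. -/
def profileEdges (g : ShapleyGame V k) (P : g.Profile) : Finset (Sym2 V) :=
  Finset.univ.filter fun e : Sym2 V => ∃ i : Fin k, e ∈ (P i).1.edges

/-- The individual cost of player `i`: each edge cost is shared equally
among the players using the edge. -/
noncomputable def playerCost (g : ShapleyGame V k) (P : g.Profile) (i : Fin k) : ℝ :=
  ∑ e ∈ (P i).1.edges.toFinset, g.c e / (g.ke P e)

/-- The social cost of a profile: total cost of all used edges. -/
noncomputable def socialCost (g : ShapleyGame V k) (P : g.Profile) : ℝ :=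
  ∑ e ∈ g.profileEdges P, g.c e

/-- Rosenthal's potential `Φ(P) = ∑_{e ∈ E(P)} H_{k_e} · c_e`. -/
noncomputable def potential (g : ShapleyGame V k) (P : g.Profile) : ℝ :=
  ∑ e ∈ g.profileEdges P, harmonicR (g.ke P e) * g.c e

/-- `P` is a Nash equilibrium: no player can decrease her individual cost
by unilaterally switching to another simple path. -/
def IsNash (g : ShapleyGame V k) (P : g.Profile) : Prop :=
  ∀ (i : Fin k) (Q : g.G.Path (g.s i) (g.t i)),
    g.playerCost P i ≤ g.playerCost (Function.update P i Q) i

/-- `P` is a social optimum: it minimizes the social cost over all profiles. -/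
def IsSocialOpt (g : ShapleyGame V k) (P : g.Profile) : Prop :=
  ∀ Q : g.Profile, g.socialCost P ≤ g.socialCost Q

/-- `P` is a potential minimizer: it minimizes Rosenthal's potential over all profiles. -/
def IsPotMin (g : ShapleyGame V k) (P : g.Profile) : Prop :=
  ∀ Q : g.Profile, g.potential P ≤ g.potential Q

/-- `P^j`: the set of edges used by exactly `j` players in profile `P`. -/
def exactly (g : ShapleyGame V k) (P : g.Profile) (j : ℕ) : Finset (Sym2 V) :=
  (g.profileEdges P).filter fun e => g.ke P e = j

/-- `|M|`: the total cost of a set of edges. -/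
noncomputable def csum (g : ShapleyGame V k) (M : Finset (Sym2 V)) : ℝ := ∑ e ∈ M, g.c e

end ShapleyGame

section AuxLemmas

open SimpleGraph

set_option linter.unusedSectionVars false

namespace ShapleyAux

variable {V : Type} [DecidableEq V]

lemma sym2_rep (e : Sym2 V) : ∃ a b, e = s(a, b) := by
  induction e using Sym2.ind with
  | _ a b => exact ⟨a, b, rfl⟩

lemma split_at_edge {G : SimpleGraph V} {a b : V} (w : G.Walk a b) {e : Sym2 V}
    (he : e ∈ w.edges) :
    ∃ (x y : V) (q1 : G.Walk a x) (hadj : G.Adj x y) (q2 : G.Walk y b),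
      w = q1.append (Walk.cons hadj q2) ∧ s(x, y) = e := by
  induction w with
  | nil => simp at he
  | @cons u c d h p ih =>
    rw [Walk.edges_cons, List.mem_cons] at he
    rcases he with he | he
    · exact ⟨u, c, Walk.nil, h, p, by simp, he.symm⟩
    · obtain ⟨x, y, q1, hadj, q2, heq, hxy⟩ := ih he
      exact ⟨x, y, Walk.cons h q1, hadj, q2, by rw [heq]; simp [Walk.cons_append], hxy⟩

lemma split_at_first {G : SimpleGraph V} {a b : V} (w : G.Walk a b) {S : Set (Sym2 V)}
    (he : ∃ e ∈ w.edges, e ∈ S) :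
    ∃ (x y : V) (q1 : G.Walk a x) (hadj : G.Adj x y) (q2 : G.Walk y b),
      w = q1.append (Walk.cons hadj q2) ∧ s(x, y) ∈ S ∧ ∀ f ∈ q1.edges, f ∉ S := by
  induction w with
  | nil => simp at he
  | @cons u c d h p ih =>
    by_cases hfirst : s(u, c) ∈ S
    · exact ⟨u, c, Walk.nil, h, p, by simp, hfirst, by simp⟩
    · have hex : ∃ e ∈ p.edges, e ∈ S := by
        obtain ⟨e, hew, heS⟩ := he
        rw [Walk.edges_cons, List.mem_cons] at hew
        rcases hew with rfl | hew
        · exact absurd heS hfirst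
        · exact ⟨e, hew, heS⟩
      obtain ⟨x, y, q1, hadj, q2, heq, hS, hclean⟩ := ih hex
      refine ⟨x, y, Walk.cons h q1, hadj, q2, by rw [heq]; simp [Walk.cons_append], hS, ?_⟩
      intro f hf
      rw [Walk.edges_cons, List.mem_cons] at hf
      rcases hf with rfl | hf
      · exact hfirst
      · exact hclean f hf

lemma reach_in {G H : SimpleGraph V} {a b : V} (w : G.Walk a b)
    (hsub : ∀ f ∈ w.edges, f ∈ H.edgeSet) {c : V} (hc : c ∈ w.support) :
    H.Reachable a c := by
  have hc' : c ∈ (w.transfer H hsub).support := by rwa [Walk.support_transfer]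
  exact ⟨(w.transfer H hsub).takeUntil c hc'⟩

lemma edges_mapLe {G G' : SimpleGraph V} (h : G ≤ G') {u v : V} (p : G.Walk u v) :
    (p.mapLe h).edges = p.edges := by
  simp only [Walk.mapLe, Walk.edges_map]
  convert List.map_id _ using 2
  ext e
  induction e with
  | _ x y => simp

lemma path_eq_edges {G : SimpleGraph V} (hG : G.IsAcyclic) {a b : V} {p q : G.Walk a b}
    (hp : p.IsPath) (hq : q.IsPath) : p.edges = q.edges := by
  have h := isAcyclic_iff_path_unique.mp hG ⟨p, hp⟩ ⟨q, hq⟩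
  have h' : p = q := congrArg Subtype.val h
  rw [h']

lemma walk_avoid {F G : SimpleGraph V} {x y : V} (p : F.Walk x y) (hp : s(x, y) ∉ p.edges)
    {a b : V} (w : G.Walk a b) (hw : ∀ f ∈ w.edges, f ∈ F.edgeSet) :
    ∃ w' : F.Walk a b, s(x, y) ∉ w'.edges := by
  induction w with
  | nil => exact ⟨Walk.nil, by simp⟩
  | @cons u c d h q ih =>
    obtain ⟨w', hw'⟩ := ih (fun f hf => hw f (by simp [hf]))
    by_cases hec : s(u, c) = s(x, y)
    · rcases Sym2.eq_iff.mp hec with ⟨rfl, rfl⟩ | ⟨rfl, rfl⟩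
      · refine ⟨p.append w', ?_⟩
        rw [Walk.edges_append, List.mem_append]
        rintro (h1 | h1)
        · exact hp h1
        · exact hw' h1
      · refine ⟨p.reverse.append w', ?_⟩
        rw [Walk.edges_append, List.mem_append, Walk.edges_reverse, List.mem_reverse]
        rintro (h1 | h1)
        · exact hp h1
        · exact hw' h1
    · have hF : F.Adj u c := by
        rw [← SimpleGraph.mem_edgeSet]
        exact hw _ (by simp)
      refine ⟨Walk.cons hF w', ?_⟩
      rw [Walk.edges_cons, List.mem_cons]
      rintro (h1 | h1)
      · exact hec h1.symm
      · exact hw' h1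

lemma edges_decomp {G : SimpleGraph V} {a x y b : V} (q1 : G.Walk a x) (hadj : G.Adj x y)
    (q2 : G.Walk y b) :
    (q1.append (Walk.cons hadj q2)).edges = q1.edges ++ s(x, y) :: q2.edges := by
  rw [Walk.edges_append, Walk.edges_cons]

lemma support_decomp {G : SimpleGraph V} {a x y b : V} (q1 : G.Walk a x) (hadj : G.Adj x y)
    (q2 : G.Walk y b) :
    (q1.append (Walk.cons hadj q2)).support = q1.support ++ q2.support := by
  rw [Walk.support_append, Walk.support_cons, List.tail_cons]

lemma disjoint_decomp {G : SimpleGraph V} {a x y b : V} {q1 : G.Walk a x} {hadj : G.Adj x y}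
    {q2 : G.Walk y b} (hw : (q1.append (Walk.cons hadj q2)).IsPath) :
    List.Disjoint q1.support q2.support := by
  have h := (Walk.isPath_def _).mp hw
  rw [support_decomp] at h
  exact fun z hz1 hz2 => (List.nodup_append.mp h).2.2 z hz1 z hz2 rfl

lemma crossing {G : SimpleGraph V} {a x y b u v : V} {q1 : G.Walk a x} {hadj : G.Adj x y}
    {q2 : G.Walk y b} (hw : (q1.append (Walk.cons hadj q2)).IsPath)
    (hu : u ∈ q1.support) (hv : v ∈ q2.support) :
    ∃ ω : G.Walk u v, ω.IsPath ∧ s(x, y) ∈ ω.edges ∧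
      ∀ f ∈ ω.edges, f ∈ (q1.append (Walk.cons hadj q2)).edges := by
  have hq1 : q1.IsPath := hw.of_append_left
  have hc2 : (Walk.cons hadj q2).IsPath := hw.of_append_right
  have hq2 : q2.IsPath := hc2.of_cons
  have hd := disjoint_decomp hw
  refine ⟨(q1.dropUntil u hu).append (Walk.cons hadj (q2.takeUntil v hv)), ?_, ?_, ?_⟩
  · rw [Walk.isPath_def, support_decomp]
    rw [List.nodup_append]
    refine ⟨(Walk.isPath_def _).mp (hq1.dropUntil hu), (Walk.isPath_def _).mp (hq2.takeUntil hv), ?_⟩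
    intro z hz1 z' hz2 hzz
    subst hzz
    exact hd (Walk.support_dropUntil_subset _ hu hz1) (Walk.support_takeUntil_subset _ hv hz2)
  · rw [edges_decomp]
    simp
  · intro f hf
    rw [edges_decomp] at hf ⊢
    rw [List.mem_append, List.mem_cons] at hf ⊢
    rcases hf with hf | hf | hf
    · exact Or.inl (Walk.edges_dropUntil_subset _ hu hf)
    · exact Or.inr (Or.inl hf)
    · exact Or.inr (Or.inr (Walk.edges_takeUntil_subset _ hv hf))

lemma mem_fromEdgeSet_edgeSet {G : SimpleGraph V} {s : Set (Sym2 V)} {f : Sym2 V}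
    (hfG : f ∈ G.edgeSet) (hfs : f ∈ s) : f ∈ (SimpleGraph.fromEdgeSet s).edgeSet := by
  rw [edgeSet_fromEdgeSet]
  exact ⟨hfs, G.not_isDiag_of_mem_edgeSet hfG⟩

end ShapleyAux

end AuxLemmas

/-- if `O` is a social optimum in which the set `O^k` of edges shared by
all `k` players is non-empty, then the edge set `E(O) ∖ O^k` induces exactly two trees
(two connected components, each acyclic), and every player has exactly one of her two
terminals in each of the two trees. Here `A` and `B` are the vertex sets of the two
components of the graph `H` with edge set `E(O) ∖ O^k`. -/
theorem opt_minus_shared_two_trees {V : Type} [Fintype V] [DecidableEq V] {k : ℕ}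
    (g : ShapleyGame V k) (O : g.Profile) (hO : g.IsSocialOpt O)
    (hOk : (g.exactly O k).Nonempty) :
    ∃ A B : Set V,
      Disjoint A B ∧
      -- every vertex incident to an edge of `E(O) ∖ O^k`, and every terminal,
      -- lies in one of the two components
      (∀ v : V, (∃ e ∈ g.profileEdges O \ g.exactly O k, v ∈ e) → v ∈ A ∪ B) ∧
      -- the graph on `E(O) ∖ O^k` is acyclic (each component is a tree) ...
      (SimpleGraph.fromEdgeSet
        (↑(g.profileEdges O \ g.exactly O k) : Set (Sym2 V))).IsAcyclic ∧
      -- ... each of `A`, `B` is connected in it ...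
      (∀ a ∈ A, ∀ a' ∈ A,
        (SimpleGraph.fromEdgeSet
          (↑(g.profileEdges O \ g.exactly O k) : Set (Sym2 V))).Reachable a a') ∧
      (∀ b ∈ B, ∀ b' ∈ B,
        (SimpleGraph.fromEdgeSet
          (↑(g.profileEdges O \ g.exactly O k) : Set (Sym2 V))).Reachable b b') ∧
      -- ... and `A`, `B` are distinct components: no connection between them
      (∀ a ∈ A, ∀ b ∈ B,
        ¬ (SimpleGraph.fromEdgeSet
          (↑(g.profileEdges O \ g.exactly O k) : Set (Sym2 V))).Reachable a b) ∧
      -- every player has exactly one terminal in each of the two trees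
      (∀ i : Fin k, (g.s i ∈ A ∧ g.t i ∈ B) ∨ (g.s i ∈ B ∧ g.t i ∈ A)) := by
  classical
  open SimpleGraph ShapleyAux in
  obtain ⟨e0, he0Ok⟩ := hOk
  have he0PE : e0 ∈ g.profileEdges O := Finset.mem_of_mem_filter _ he0Ok
  have mem_PE : ∀ {e : Sym2 V}, e ∈ g.profileEdges O ↔ ∃ i, e ∈ (O i).1.edges := by
    intro e
    simp [ShapleyGame.profileEdges]
  have hPiPE : ∀ (i : Fin k) {f : Sym2 V}, f ∈ (O i).1.edges → f ∈ g.profileEdges O := by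
    intro i f hf
    exact mem_PE.mpr ⟨i, hf⟩
  have hPEG : ∀ {e : Sym2 V}, e ∈ g.profileEdges O → e ∈ g.G.edgeSet := by
    intro e he
    obtain ⟨i, hi⟩ := mem_PE.mp he
    exact (O i).1.edges_subset_edgeSet hi
  have hAll : ∀ {e : Sym2 V}, e ∈ g.exactly O k → ∀ i, e ∈ (O i).1.edges := by
    intro e he i
    rw [ShapleyGame.exactly, Finset.mem_filter] at he
    have hke := he.2
    rw [ShapleyGame.ke] at hke
    have huniv : (Finset.univ.filter fun j : Fin k => e ∈ (O j).1.edges) = Finset.univ :=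
      Finset.eq_univ_of_card _ (by rw [hke, Fintype.card_fin])
    have hi : i ∈ Finset.univ.filter fun j : Fin k => e ∈ (O j).1.edges := by
      rw [huniv]; exact Finset.mem_univ i
    exact (Finset.mem_filter.mp hi).2
  set F := SimpleGraph.fromEdgeSet (↑(g.profileEdges O) : Set (Sym2 V)) with hF
  set H := SimpleGraph.fromEdgeSet (↑(g.profileEdges O \ g.exactly O k) : Set (Sym2 V)) with hH
  have hPEF : ∀ {f : Sym2 V}, f ∈ g.profileEdges O → f ∈ F.edgeSet := by
    intro f hf
    exact ShapleyAux.mem_fromEdgeSet_edgeSet (hPEG hf) (Finset.mem_coe.mpr hf)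
  have hFedge : ∀ (i : Fin k), ∀ f ∈ (O i).1.edges, f ∈ F.edgeSet :=
    fun i f hf => hPEF (hPiPE i hf)
  have hHF : H ≤ F := SimpleGraph.fromEdgeSet_mono (by
    intro f hf
    rw [Finset.mem_coe, Finset.mem_sdiff] at hf
    exact Finset.mem_coe.mpr hf.1)
  have hFG : F ≤ g.G := by
    intro u v huv
    rw [hF, SimpleGraph.fromEdgeSet_adj] at huv
    exact (SimpleGraph.mem_edgeSet _).mp (hPEG (Finset.mem_coe.mp huv.1))
  have hHedge : ∀ {f : Sym2 V}, f ∈ g.profileEdges O → f ∉ g.exactly O k → f ∈ H.edgeSet := by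
    intro f h1 h2
    exact ShapleyAux.mem_fromEdgeSet_edgeSet (hPEG h1)
      (by rw [Finset.mem_coe, Finset.mem_sdiff]; exact ⟨h1, h2⟩)
  have hHnotOk : ∀ {f : Sym2 V}, f ∈ H.edgeSet → f ∉ g.exactly O k := by
    intro f hf
    rw [hH, SimpleGraph.edgeSet_fromEdgeSet] at hf
    have h1 := hf.1
    rw [Finset.mem_coe, Finset.mem_sdiff] at h1
    exact h1.2
  have hHeF : ∀ {f : Sym2 V}, f ∈ H.edgeSet → f ∈ F.edgeSet := by
    intro f hf
    exact (SimpleGraph.edgeSet_mono hHF) hf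
  -- F is acyclic, by social optimality
  have hFacyc : F.IsAcyclic := by
    rw [SimpleGraph.isAcyclic_iff_forall_edge_isBridge]
    intro e he
    revert he
    induction e using Sym2.ind with
    | _ x y =>
      intro he
      rw [SimpleGraph.isBridge_iff]
      intro hreach
      rw [SimpleGraph.reachable_deleteEdges_iff_exists_walk] at hreach
      obtain ⟨p, hp⟩ := hreach
      have hQex : ∀ i : Fin k, ∃ w' : F.Walk (g.s i) (g.t i), s(x, y) ∉ w'.edges :=
        fun i => ShapleyAux.walk_avoid p hp (O i).1 (hFedge i)
      choose w' hw' using hQex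
      have hxyPE : s(x, y) ∈ g.profileEdges O := by
        rw [hF, SimpleGraph.edgeSet_fromEdgeSet] at he
        exact Finset.mem_coe.mp he.1
      let Q : g.Profile := fun i => ((w' i).mapLe hFG).toPath
      have hQsub : g.profileEdges Q ⊆ (g.profileEdges O).erase s(x, y) := by
        intro f hf
        simp only [ShapleyGame.profileEdges, Finset.mem_filter] at hf
        obtain ⟨i, hi⟩ := hf.2
        have h1 : f ∈ ((w' i).mapLe hFG).edges := SimpleGraph.Walk.edges_toPath_subset _ hi
        rw [ShapleyAux.edges_mapLe] at h1
        have h2 : f ∈ F.edgeSet := (w' i).edges_subset_edgeSet h1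
        rw [hF, SimpleGraph.edgeSet_fromEdgeSet] at h2
        exact Finset.mem_erase.mpr ⟨fun hc => hw' i (hc ▸ h1), Finset.mem_coe.mp h2.1⟩
      have hpos : (0 : ℝ) < g.c s(x, y) := g.c_pos _ (hPEG hxyPE)
      have h1 : g.socialCost Q ≤ ∑ f ∈ (g.profileEdges O).erase s(x, y), g.c f := by
        apply Finset.sum_le_sum_of_subset_of_nonneg hQsub
        intro f hf _
        exact le_of_lt (g.c_pos _ (hPEG (Finset.mem_of_mem_erase hf)))
      have h2 : (∑ f ∈ (g.profileEdges O).erase s(x, y), g.c f) + g.c s(x, y)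
          = g.socialCost O := Finset.sum_erase_add _ _ hxyPE
      have h3 := hO Q
      linarith
  have hHacyc : H.IsAcyclic := by
    intro v c hc
    exact hFacyc (c.mapLe hHF) (hc.mapLe hHF)
  have hTF : ∀ i : Fin k, ((O i).1.transfer F (hFedge i)).IsPath := fun i => (O i).2.transfer _
  have hneq : ∀ i : Fin k, ¬ H.Reachable (g.s i) (g.t i) := by
    intro i hr
    obtain ⟨wH⟩ := hr
    have hqpath : (wH.toPath.1 : H.Walk _ _).IsPath := wH.toPath.2
    have hqF : ∀ f ∈ (wH.toPath.1 : H.Walk _ _).edges, f ∈ F.edgeSet :=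
      fun f hf => hHeF ((wH.toPath.1 : H.Walk _ _).edges_subset_edgeSet hf)
    have hEq := ShapleyAux.path_eq_edges hFacyc (hTF i) (hqpath.transfer hqF)
    have h1 : e0 ∈ ((O i).1.transfer F (hFedge i)).edges := by
      rw [SimpleGraph.Walk.edges_transfer]; exact hAll he0Ok i
    rw [hEq, SimpleGraph.Walk.edges_transfer] at h1
    exact hHnotOk ((wH.toPath.1 : H.Walk _ _).edges_subset_edgeSet h1) he0Ok
  obtain ⟨i0, hi0⟩ := mem_PE.mp he0PE
  -- main side lemma
  have hside : ∀ (a b : V) (W : g.G.Walk a b), W.IsPath →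
      (∀ f ∈ g.exactly O k, f ∈ W.edges) → (∀ f ∈ W.edges, f ∈ g.profileEdges O) →
      H.Reachable (g.s i0) a ∨ H.Reachable (g.t i0) a := by
    intro a b W hWpath hOkW hWPE
    obtain ⟨x', y', q1, hadj, q2, hWeq, hfOk, hclean⟩ :=
      ShapleyAux.split_at_first W (S := {f | f ∈ g.exactly O k}) ⟨e0, hOkW e0 he0Ok, he0Ok⟩
    have hfOk' : s(x', y') ∈ g.exactly O k := hfOk
    have hclean' : ∀ f ∈ q1.edges, f ∉ g.exactly O k := hclean
    have hWq : (q1.append (SimpleGraph.Walk.cons hadj q2)).IsPath := hWeq ▸ hWpath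
    have hq2path : q2.IsPath := hWq.of_append_right.of_cons
    have hq1PE : ∀ f ∈ q1.edges, f ∈ g.profileEdges O := by
      intro f hf
      apply hWPE
      rw [hWeq, ShapleyAux.edges_decomp]
      simp [hf]
    have hq2PE : ∀ f ∈ q2.edges, f ∈ g.profileEdges O := by
      intro f hf
      apply hWPE
      rw [hWeq, ShapleyAux.edges_decomp]
      simp [hf]
    have hq1H : ∀ f ∈ q1.edges, f ∈ H.edgeSet :=
      fun f hf => hHedge (hq1PE f hf) (hclean' f hf)
    have hax' : H.Reachable a x' := ShapleyAux.reach_in q1 hq1H q1.end_mem_support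
    have hfstarW : s(x', y') ∈ W.edges := hOkW _ hfOk'
    have hfstarPE : s(x', y') ∈ g.profileEdges O := hWPE _ hfstarW
    have hf0 : s(x', y') ∈ (O i0).1.edges := hAll hfOk' i0
    obtain ⟨x0, y0, r1, hadj0, r2, hP0eq, hsym⟩ := ShapleyAux.split_at_edge (O i0).1 hf0
    have hP0q : (r1.append (SimpleGraph.Walk.cons hadj0 r2)).IsPath := hP0eq ▸ (O i0).2
    have hP0nodupE : (r1.edges ++ s(x0, y0) :: r2.edges).Nodup := by
      have h := (O i0).2.isTrail.edges_nodup
      rwa [hP0eq, ShapleyAux.edges_decomp] at h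
    have hr1PE : ∀ f ∈ r1.edges, f ∈ g.profileEdges O := by
      intro f hf
      apply hPiPE i0
      rw [hP0eq, ShapleyAux.edges_decomp]
      simp [hf]
    have hr2PE : ∀ f ∈ r2.edges, f ∈ g.profileEdges O := by
      intro f hf
      apply hPiPE i0
      rw [hP0eq, ShapleyAux.edges_decomp]
      simp [hf]
    have hfstar_not_r1 : s(x0, y0) ∉ r1.edges := by
      rw [List.nodup_append] at hP0nodupE
      intro hc
      exact hP0nodupE.2.2 _ hc _ List.mem_cons_self rfl
    have hfstar_not_r2 : s(x0, y0) ∉ r2.edges := by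
      rw [List.nodup_append] at hP0nodupE
      exact (List.nodup_cons.mp hP0nodupE.2.1).1
    have hOk_q2 : ∀ {f' : Sym2 V}, f' ∈ g.exactly O k → f' ≠ s(x', y') → f' ∈ q2.edges := by
      intro f' hf'Ok hne
      have hf'W : f' ∈ W.edges := hOkW f' hf'Ok
      rw [hWeq, ShapleyAux.edges_decomp, List.mem_append, List.mem_cons] at hf'W
      rcases hf'W with h | h | h
      · exact absurd hf'Ok (hclean' f' h)
      · exact absurd h hne
      · exact h
    have hπw : ∀ {u' : V} (hu'q2 : u' ∈ q2.support),
        ∃ ω : g.G.Walk x' u', ω.IsPath ∧ s(x', y') ∈ ω.edges ∧ ∀ f ∈ ω.edges, f ∈ F.edgeSet := by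
      intro u' hu'q2
      refine ⟨SimpleGraph.Walk.cons hadj (q2.takeUntil u' hu'q2), ?_, by simp, ?_⟩
      · rw [SimpleGraph.Walk.isPath_def, SimpleGraph.Walk.support_cons, List.nodup_cons]
        refine ⟨?_, (SimpleGraph.Walk.isPath_def _).mp (hq2path.takeUntil hu'q2)⟩
        intro hc
        exact (ShapleyAux.disjoint_decomp hWq) q1.end_mem_support
          (SimpleGraph.Walk.support_takeUntil_subset _ hu'q2 hc)
      · intro f hf
        rw [SimpleGraph.Walk.edges_cons, List.mem_cons] at hf
        rcases hf with rfl | hf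
        · exact hPEF hfstarPE
        · exact hPEF (hq2PE f (SimpleGraph.Walk.edges_takeUntil_subset _ hu'q2 hf))
    rcases Sym2.eq_iff.mp hsym.symm with ⟨hx0, hy0⟩ | ⟨hx0, hy0⟩
    · subst hx0; subst hy0
      left
      have hr1clean : ∀ f ∈ r1.edges, f ∉ g.exactly O k := by
        intro f' hf'r1 hf'Ok
        have hne : f' ≠ s(x', y') := fun hc => hfstar_not_r1 (hc ▸ hf'r1)
        have hf'q2 : f' ∈ q2.edges := hOk_q2 hf'Ok hne
        obtain ⟨α, β, rfl⟩ := ShapleyAux.sym2_rep f'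
        have hαβ : α ≠ β := by
          intro hc
          exact (g.G.not_isDiag_of_mem_edgeSet (hPEG (hr1PE _ hf'r1)))
            (by rw [hc]; exact Sym2.mk_isDiag_iff.mpr rfl)
        obtain ⟨u', hu'x, hu'r1, hu'q2⟩ :
            ∃ u', u' ≠ x' ∧ u' ∈ r1.support ∧ u' ∈ q2.support := by
          by_cases hα : α = x'
          · refine ⟨β, ?_, r1.snd_mem_support_of_mem_edges hf'r1,
              q2.snd_mem_support_of_mem_edges hf'q2⟩
            intro hc
            exact hαβ (by rw [hα, ← hc])
          · exact ⟨α, hα, r1.fst_mem_support_of_mem_edges hf'r1,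
              q2.fst_mem_support_of_mem_edges hf'q2⟩
        obtain ⟨ω, hωpath, hωstar, hωF⟩ := hπw hu'q2
        have hdrop_path : (r1.dropUntil u' hu'r1).IsPath := (hP0q.of_append_left).dropUntil hu'r1
        have hrevF : ∀ f ∈ (r1.dropUntil u' hu'r1).reverse.edges, f ∈ F.edgeSet := by
          intro f hf
          rw [SimpleGraph.Walk.edges_reverse, List.mem_reverse] at hf
          exact hPEF (hr1PE f (SimpleGraph.Walk.edges_dropUntil_subset _ hu'r1 hf))
        have hEq := ShapleyAux.path_eq_edges hFacyc (hωpath.transfer hωF)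
          ((hdrop_path.reverse).transfer hrevF)
        have h1 : s(x', y') ∈ (ω.transfer F hωF).edges := by
          rw [SimpleGraph.Walk.edges_transfer]; exact hωstar
        rw [hEq, SimpleGraph.Walk.edges_transfer, SimpleGraph.Walk.edges_reverse,
          List.mem_reverse] at h1
        exact hfstar_not_r1 (SimpleGraph.Walk.edges_dropUntil_subset _ hu'r1 h1)
      have hr1H : ∀ f ∈ r1.edges, f ∈ H.edgeSet :=
        fun f hf => hHedge (hr1PE f hf) (hr1clean f hf)
      have hs0x : H.Reachable (g.s i0) x' := ShapleyAux.reach_in r1 hr1H r1.end_mem_support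
      exact hs0x.trans hax'.symm
    · subst hx0; subst hy0
      right
      have hr2clean : ∀ f ∈ r2.edges, f ∉ g.exactly O k := by
        intro f' hf'r2 hf'Ok
        have hne : f' ≠ s(x', y') := by
          intro hc
          apply hfstar_not_r2
          rw [Sym2.eq_swap]
          exact hc ▸ hf'r2
        have hf'q2 : f' ∈ q2.edges := hOk_q2 hf'Ok hne
        obtain ⟨α, β, rfl⟩ := ShapleyAux.sym2_rep f'
        have hαβ : α ≠ β := by
          intro hc
          exact (g.G.not_isDiag_of_mem_edgeSet (hPEG (hr2PE _ hf'r2)))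
            (by rw [hc]; exact Sym2.mk_isDiag_iff.mpr rfl)
        obtain ⟨u', hu'x, hu'r2, hu'q2⟩ :
            ∃ u', u' ≠ x' ∧ u' ∈ r2.support ∧ u' ∈ q2.support := by
          by_cases hα : α = x'
          · refine ⟨β, ?_, r2.snd_mem_support_of_mem_edges hf'r2,
              q2.snd_mem_support_of_mem_edges hf'q2⟩
            intro hc
            exact hαβ (by rw [hα, ← hc])
          · exact ⟨α, hα, r2.fst_mem_support_of_mem_edges hf'r2,
              q2.fst_mem_support_of_mem_edges hf'q2⟩
        obtain ⟨ω, hωpath, hωstar, hωF⟩ := hπw hu'q2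
        have htake_path : (r2.takeUntil u' hu'r2).IsPath :=
          (hP0q.of_append_right.of_cons).takeUntil hu'r2
        have htakeF : ∀ f ∈ (r2.takeUntil u' hu'r2).edges, f ∈ F.edgeSet :=
          fun f hf => hPEF (hr2PE f (SimpleGraph.Walk.edges_takeUntil_subset _ hu'r2 hf))
        have hEq := ShapleyAux.path_eq_edges hFacyc (hωpath.transfer hωF)
          (htake_path.transfer htakeF)
        have h1 : s(x', y') ∈ (ω.transfer F hωF).edges := by
          rw [SimpleGraph.Walk.edges_transfer]; exact hωstar
        rw [hEq, SimpleGraph.Walk.edges_transfer] at h1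
        apply hfstar_not_r2
        rw [Sym2.eq_swap]
        exact SimpleGraph.Walk.edges_takeUntil_subset _ hu'r2 h1
      have hr2H : ∀ f ∈ r2.edges, f ∈ H.edgeSet :=
        fun f hf => hHedge (hr2PE f hf) (hr2clean f hf)
      have hxt : H.Reachable x' (g.t i0) := ShapleyAux.reach_in r2 hr2H r2.end_mem_support
      exact hxt.symm.trans hax'.symm
  have hsSide : ∀ i : Fin k, H.Reachable (g.s i0) (g.s i) ∨ H.Reachable (g.t i0) (g.s i) :=
    fun i => hside _ _ (O i).1 (O i).2 (fun f hf => hAll hf i) (fun f hf => hPiPE i hf)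
  have htSide : ∀ i : Fin k, H.Reachable (g.s i0) (g.t i) ∨ H.Reachable (g.t i0) (g.t i) :=
    fun i => hside _ _ (O i).1.reverse ((O i).2.reverse)
      (fun f hf => by rw [SimpleGraph.Walk.edges_reverse, List.mem_reverse]; exact hAll hf i)
      (fun f hf => hPiPE i (by rwa [SimpleGraph.Walk.edges_reverse, List.mem_reverse] at hf))
  -- coverage
  have hcov : ∀ v : V, (∃ e ∈ g.profileEdges O \ g.exactly O k, v ∈ e) →
      H.Reachable (g.s i0) v ∨ H.Reachable (g.t i0) v := by
    rintro v ⟨e, heD, hve⟩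
    rw [Finset.mem_sdiff] at heD
    obtain ⟨hePE, heOk⟩ := heD
    obtain ⟨i, hei⟩ := mem_PE.mp hePE
    obtain ⟨x', y', q1, hadj, q2, hPeq, hsym⟩ := ShapleyAux.split_at_edge (O i).1 hei
    have hPq : (q1.append (SimpleGraph.Walk.cons hadj q2)).IsPath := hPeq ▸ (O i).2
    have hq1PE : ∀ f ∈ q1.edges, f ∈ g.profileEdges O := by
      intro f hf
      apply hPiPE i
      rw [hPeq, ShapleyAux.edges_decomp]
      simp [hf]
    have hq2PE : ∀ f ∈ q2.edges, f ∈ g.profileEdges O := by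
      intro f hf
      apply hPiPE i
      rw [hPeq, ShapleyAux.edges_decomp]
      simp [hf]
    have hclaim : (∀ f ∈ q1.edges, f ∉ g.exactly O k) ∨ (∀ f ∈ q2.edges, f ∉ g.exactly O k) := by
      by_contra hcon
      push_neg at hcon
      obtain ⟨⟨f1, hf1q1, hf1Ok⟩, ⟨f2, hf2q2, hf2Ok⟩⟩ := hcon
      have hnodupP : ((O i).1).edges.Nodup := (O i).2.isTrail.edges_nodup
      have hedgesP : (O i).1.edges = q1.edges ++ s(x', y') :: q2.edges := by
        rw [hPeq, ShapleyAux.edges_decomp]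
      have hf1f2 : f1 ≠ f2 := by
        intro hc
        rw [hedgesP, List.nodup_append] at hnodupP
        exact hnodupP.2.2 _ hf1q1 _ (List.mem_cons_of_mem _ hf2q2) hc
      obtain ⟨m, hm⟩ : ∃ m : Fin k, e ∉ (O m).1.edges := by
        by_contra hall
        push_neg at hall
        apply heOk
        rw [ShapleyGame.exactly, Finset.mem_filter]
        refine ⟨hePE, ?_⟩
        rw [ShapleyGame.ke]
        rw [Finset.filter_true_of_mem (fun j _ => hall j)]
        simp
      have hf1m : f1 ∈ (O m).1.edges := hAll hf1Ok m
      have hf2m : f2 ∈ (O m).1.edges := hAll hf2Ok m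
      obtain ⟨γ, δ, m1, hadjm, m2, hMeq, hsymm1⟩ := ShapleyAux.split_at_edge (O m).1 hf1m
      have hf2loc : f2 ∈ m1.edges ∨ f2 ∈ m2.edges := by
        have h := hf2m
        rw [hMeq, ShapleyAux.edges_decomp, List.mem_append, List.mem_cons] at h
        rcases h with h | h | h
        · exact Or.inl h
        · exact absurd (h.trans hsymm1) hf1f2.symm
        · exact Or.inr h
      have hMq : (m1.append (SimpleGraph.Walk.cons hadjm m2)).IsPath := hMeq ▸ (O m).2
      obtain ⟨α2, β2, rfl⟩ := ShapleyAux.sym2_rep f2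
      have hγq1 : γ ∈ q1.support := q1.fst_mem_support_of_mem_edges (hsymm1 ▸ hf1q1)
      have hδq1 : δ ∈ q1.support := q1.snd_mem_support_of_mem_edges (hsymm1 ▸ hf1q1)
      have hb'q2 : α2 ∈ q2.support := q2.fst_mem_support_of_mem_edges hf2q2
      have hePm : e ∉ (O m).1.edges := hm
      rcases hf2loc with hf2m1 | hf2m2
      · have hα2m1 : α2 ∈ m1.support := m1.fst_mem_support_of_mem_edges hf2m1
        obtain ⟨ω, hωpath, hωe, hωsub⟩ := ShapleyAux.crossing hPq hγq1 hb'q2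
        have hωF : ∀ f ∈ ω.edges, f ∈ F.edgeSet := by
          intro f hf
          apply hPEF
          apply hPiPE i
          rw [hPeq]
          exact hωsub f hf
        have hπ : (m1.dropUntil α2 hα2m1).IsPath := (hMq.of_append_left).dropUntil hα2m1
        have hπsub : ∀ f ∈ (m1.dropUntil α2 hα2m1).edges, f ∈ (O m).1.edges := by
          intro f hf
          rw [hMeq, ShapleyAux.edges_decomp]
          simp [SimpleGraph.Walk.edges_dropUntil_subset _ hα2m1 hf]
        have hπF : ∀ f ∈ (m1.dropUntil α2 hα2m1).reverse.edges, f ∈ F.edgeSet := by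
          intro f hf
          rw [SimpleGraph.Walk.edges_reverse, List.mem_reverse] at hf
          exact hPEF (hPiPE m (hπsub f hf))
        have hEq := ShapleyAux.path_eq_edges hFacyc (hωpath.transfer hωF)
          ((hπ.reverse).transfer hπF)
        have h1 : s(x', y') ∈ (ω.transfer F hωF).edges := by
          rw [SimpleGraph.Walk.edges_transfer]; exact hωe
        rw [hEq, SimpleGraph.Walk.edges_transfer, SimpleGraph.Walk.edges_reverse,
          List.mem_reverse] at h1
        have hmem : s(x', y') ∈ (O m).1.edges := hπsub _ h1
        rw [hsym] at hmem
        exact hePm hmem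
      · have hα2m2 : α2 ∈ m2.support := m2.fst_mem_support_of_mem_edges hf2m2
        obtain ⟨ω, hωpath, hωe, hωsub⟩ := ShapleyAux.crossing hPq hδq1 hb'q2
        have hωF : ∀ f ∈ ω.edges, f ∈ F.edgeSet := by
          intro f hf
          apply hPEF
          apply hPiPE i
          rw [hPeq]
          exact hωsub f hf
        have hπ : (m2.takeUntil α2 hα2m2).IsPath :=
          (hMq.of_append_right.of_cons).takeUntil hα2m2
        have hπsub : ∀ f ∈ (m2.takeUntil α2 hα2m2).edges, f ∈ (O m).1.edges := by
          intro f hf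
          rw [hMeq, ShapleyAux.edges_decomp]
          simp [SimpleGraph.Walk.edges_takeUntil_subset _ hα2m2 hf]
        have hπF : ∀ f ∈ (m2.takeUntil α2 hα2m2).edges, f ∈ F.edgeSet :=
          fun f hf => hPEF (hPiPE m (hπsub f hf))
        have hEq := ShapleyAux.path_eq_edges hFacyc (hωpath.transfer hωF)
          (hπ.transfer hπF)
        have h1 : s(x', y') ∈ (ω.transfer F hωF).edges := by
          rw [SimpleGraph.Walk.edges_transfer]; exact hωe
        rw [hEq, SimpleGraph.Walk.edges_transfer] at h1
        have hmem : s(x', y') ∈ (O m).1.edges := hπsub _ h1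
        rw [hsym] at hmem
        exact hePm hmem
    have hvxy : v = x' ∨ v = y' := by
      rw [← hsym] at hve
      exact Sym2.mem_iff.mp hve
    have hHadj : H.Adj x' y' := by
      rw [hH, SimpleGraph.fromEdgeSet_adj]
      refine ⟨?_, hadj.ne⟩
      rw [Finset.mem_coe, Finset.mem_sdiff, hsym]
      exact ⟨hePE, heOk⟩
    rcases hclaim with hcl | hcl
    · have hq1H : ∀ f ∈ q1.edges, f ∈ H.edgeSet := fun f hf => hHedge (hq1PE f hf) (hcl f hf)
      have hsx : H.Reachable (g.s i) x' := ShapleyAux.reach_in q1 hq1H q1.end_mem_support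
      have hsv : H.Reachable (g.s i) v := by
        rcases hvxy with rfl | rfl
        · exact hsx
        · exact hsx.trans ⟨hHadj.toWalk⟩
      rcases hsSide i with h | h
      · exact Or.inl (h.trans hsv)
      · exact Or.inr (h.trans hsv)
    · have hq2H : ∀ f ∈ q2.edges, f ∈ H.edgeSet := fun f hf => hHedge (hq2PE f hf) (hcl f hf)
      have hyt : H.Reachable y' (g.t i) := ShapleyAux.reach_in q2 hq2H q2.end_mem_support
      have htv : H.Reachable (g.t i) v := by
        rcases hvxy with rfl | rfl
        · exact hyt.symm.trans ⟨(hHadj.symm).toWalk⟩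
        · exact hyt.symm
      rcases htSide i with h | h
      · exact Or.inl (h.trans htv)
      · exact Or.inr (h.trans htv)
  refine ⟨{v | H.Reachable (g.s i0) v}, {v | H.Reachable (g.t i0) v}, ?_, ?_, hHacyc, ?_, ?_, ?_, ?_⟩
  · rw [Set.disjoint_left]
    intro v hv1 hv2
    exact hneq i0 (hv1.trans hv2.symm)
  · intro v hv
    rcases hcov v hv with h | h
    · exact Or.inl h
    · exact Or.inr h
  · intro p hp p' hp'
    exact hp.symm.trans hp'
  · intro p hp p' hp'
    exact hp.symm.trans hp'
  · intro p hp q hq hr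
    exact hneq i0 ((hp.trans hr).trans hq.symm)
  · intro i
    rcases hsSide i with hs | hs <;> rcases htSide i with ht | ht
    · exact absurd (hs.symm.trans ht) (hneq i)
    · exact Or.inl ⟨hs, ht⟩
    · exact Or.inr ⟨hs, ht⟩
    · exact absurd (hs.symm.trans ht) (hneq i)
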